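/- Let F be a finite prime field and f : F^n → F a function. Then f has global degree at most d (i.e., f is computed by a polynomial of total degree ≤ d in n variables) if and only if for all a₁,...,a_{d+1}, x ∈ F^n, the iterated finite difference D_{a_{d+1}}...D_{a_1} f(x) = 0, where D_a f(x) := f(x+a) − f(x). -/

import Mathlib

/-- Discrete derivative of `f` in direction `a`: `D_a f (x) = f (x + a) - f x`. -/
def discDeriv {n q : ℕ} (a : Fin n → ZMod q) (f : (Fin n → ZMod q) → ZMod q) :
    (Fin n → ZMod q) → ZMod q := fun x => f (x + a) - f x

/-- Iterated discrete derivative `D_{a_k} ⋯ D_{a_1} f`. -/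
def iterDeriv {n q : ℕ} : (k : ℕ) → (Fin k → (Fin n → ZMod q)) →
    ((Fin n → ZMod q) → ZMod q) → ((Fin n → ZMod q) → ZMod q)
  | 0, _, f => f
  | (k + 1), a, f => discDeriv (a (Fin.last k)) (iterDeriv k (fun i => a i.castSucc) f)

namespace DegProof

variable {n q : ℕ}

/-- Apply discrete derivatives along a list of directions, head outermost. -/
def derivList : List (Fin n → ZMod q) → ((Fin n → ZMod q) → ZMod q) →
    ((Fin n → ZMod q) → ZMod q)
  | [], f => f
  | a :: t, f => discDeriv a (derivList t f)

lemma derivList_append (L₁ L₂ : List (Fin n → ZMod q)) (f : (Fin n → ZMod q) → ZMod q) :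
    derivList (L₁ ++ L₂) f = derivList L₁ (derivList L₂ f) := by
  induction L₁ with
  | nil => rfl
  | cons a t ih => simp [derivList, ih]

lemma derivList_eq_iterDeriv (L : List (Fin n → ZMod q)) (f : (Fin n → ZMod q) → ZMod q) :
    ∃ a : Fin L.length → (Fin n → ZMod q), derivList L f = iterDeriv L.length a f := by
  induction L with
  | nil => exact ⟨Fin.elim0, rfl⟩
  | cons h t ih =>
    obtain ⟨a, ha⟩ := ih
    refine ⟨Fin.snoc a h, ?_⟩
    show discDeriv h (derivList t f) = iterDeriv (t.length + 1) (Fin.snoc a h) f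
    rw [iterDeriv]
    have h1 : (fun i : Fin t.length =>
        (Fin.snoc a h : Fin (t.length + 1) → (Fin n → ZMod q)) i.castSucc) = a :=
      funext fun i => by simp
    rw [Fin.snoc_last, h1, ha]

lemma derivList_vanish {d : ℕ} {f : (Fin n → ZMod q) → ZMod q}
    (H : ∀ (a : Fin (d + 1) → (Fin n → ZMod q)) (x : Fin n → ZMod q),
      iterDeriv (d + 1) a f x = 0)
    (L : List (Fin n → ZMod q)) (hL : d + 1 ≤ L.length) :
    ∀ x, derivList L f x = 0 := by
  induction L with
  | nil => simp at hL
  | cons h t ih =>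
    rcases lt_or_eq_of_le hL with hlt | heq
    · intro x
      have ht : ∀ x, derivList t f x = 0 := ih (by have h' := hlt; simp only [List.length_cons] at h'; omega)
      show derivList t f (x + h) - derivList t f x = 0
      rw [ht, ht, sub_zero]
    · obtain ⟨a, ha⟩ := derivList_eq_iterDeriv (h :: t) f
      have hlen : (h :: t).length = d + 1 := heq.symm
      intro x
      rw [ha]
      have hd : t.length = d := by simpa using hlen
      subst hd
      exact H a x

lemma discDeriv_sum {ι : Type*} (A : Finset ι) (a : Fin n → ZMod q)
    (F : ι → ((Fin n → ZMod q) → ZMod q)) :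
    discDeriv a (fun x => ∑ k ∈ A, F k x) = fun x => ∑ k ∈ A, discDeriv a (F k) x := by
  funext x
  simp [discDeriv, Finset.sum_sub_distrib]

lemma discDeriv_const_mul (a : Fin n → ZMod q) (c : ZMod q) (g : (Fin n → ZMod q) → ZMod q) :
    discDeriv a (fun x => c * g x) = fun x => c * discDeriv a g x := by
  funext x
  simp [discDeriv, mul_sub]

lemma derivList_sum {ι : Type*} (A : Finset ι) (L : List (Fin n → ZMod q))
    (F : ι → ((Fin n → ZMod q) → ZMod q)) :
    derivList L (fun x => ∑ k ∈ A, F k x) = fun x => ∑ k ∈ A, derivList L (F k) x := by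
  induction L with
  | nil => rfl
  | cons h t ih => simp only [derivList, ih, discDeriv_sum]

lemma derivList_const_mul (L : List (Fin n → ZMod q)) (c : ZMod q)
    (g : (Fin n → ZMod q) → ZMod q) :
    derivList L (fun x => c * g x) = fun x => c * derivList L g x := by
  induction L with
  | nil => rfl
  | cons h t ih => simp only [derivList, ih, discDeriv_const_mul]


/-- Falling-factorial function `t(t-1)⋯(t-k+1)`. -/
def ph (q : ℕ) (k : ℕ) (t : ZMod q) : ZMod q := ∏ j ∈ Finset.range k, (t - (j : ZMod q))

/-- Product of falling factorials, one per coordinate. -/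
def gs (s : Fin n → ℕ) : (Fin n → ZMod q) → ZMod q := fun x => ∏ i, ph q (s i) (x i)

/-- Coordinate direction. -/
def eDir (n q : ℕ) (i : Fin n) : Fin n → ZMod q := Pi.single i 1

lemma ph_step (k : ℕ) (t : ZMod q) :
    ph q (k + 1) (t + 1) - ph q (k + 1) t = (k + 1 : ℕ) * ph q k t := by
  have h1 : ph q (k + 1) (t + 1) = ph q k t * (t + 1) := by
    rw [ph, Finset.prod_range_succ']
    congr 1
    · apply Finset.prod_congr rfl
      intro j _
      push_cast
      ring
    · simp
  have h2 : ph q (k + 1) t = ph q k t * (t - (k : ZMod q)) := Finset.prod_range_succ _ _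
  rw [h1, h2]
  push_cast
  ring

lemma discDeriv_e_gs (i : Fin n) (s : Fin n → ℕ) :
    discDeriv (eDir n q i) (gs s) =
      fun x => (s i : ZMod q) * gs (Function.update s i (s i - 1)) x := by
  funext x
  have hsplit : ∀ (u : Fin n → ℕ) (y : Fin n → ZMod q),
      gs (n := n) (q := q) u y = ph q (u i) (y i) * ∏ j ∈ Finset.univ.erase i, ph q (u j) (y j) :=
    fun u y => (Finset.mul_prod_erase Finset.univ _ (Finset.mem_univ i)).symm
  have hoff : ∀ j ∈ Finset.univ.erase i,
      ph q (s j) ((x + eDir n q i) j) = ph q (s j) (x j) := by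
    intro j hj
    have hji : j ≠ i := (Finset.mem_erase.mp hj).1
    simp [eDir, Pi.single_eq_of_ne hji]
  have hupd : ∀ j ∈ Finset.univ.erase i,
      ph q (Function.update s i (s i - 1) j) (x j) = ph q (s j) (x j) := by
    intro j hj
    have hji : j ≠ i := (Finset.mem_erase.mp hj).1
    rw [Function.update_of_ne hji]
  show gs s (x + eDir n q i) - gs s x = _
  rw [hsplit s (x + eDir n q i), hsplit s x, hsplit (Function.update s i (s i - 1)) x]
  rw [Finset.prod_congr rfl hoff, Finset.prod_congr rfl hupd]
  have hxi : (x + eDir n q i) i = x i + 1 := by simp [eDir]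
  rw [hxi, Function.update_self]
  rw [← sub_mul]
  cases hsi : s i with
  | zero => simp [ph]
  | succ k =>
    rw [Nat.add_sub_cancel, ph_step]
    ring

lemma derivList_replicate (i : Fin n) (c : ℕ) (s : Fin n → ℕ) :
    derivList (List.replicate c (eDir n q i)) (gs s) =
      fun x => (∏ j ∈ Finset.range c, ((s i : ZMod q) - (j : ZMod q))) *
        gs (Function.update s i (s i - c)) x := by
  induction c with
  | zero =>
    simp only [List.replicate, derivList, Finset.range_zero, Finset.prod_empty, one_mul,
      Nat.sub_zero, Function.update_eq_self]
  | succ c ih =>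
    rw [List.replicate_succ]
    show discDeriv (eDir n q i) (derivList (List.replicate c (eDir n q i)) (gs s)) = _
    rw [ih, discDeriv_const_mul, discDeriv_e_gs]
    funext x
    rw [Function.update_self, Function.update_idem, Nat.sub_sub]
    rw [Finset.prod_range_succ]
    by_cases hc : c ≤ s i
    · rw [Nat.cast_sub hc]
      ring
    · have hz : (∏ j ∈ Finset.range c, ((s i : ZMod q) - (j : ZMod q))) = 0 := by
        apply Finset.prod_eq_zero (Finset.mem_range.mpr (Nat.lt_of_not_le hc))
        simp
      rw [hz]
      ring

lemma derivList_coords (c s : Fin n → ℕ) (t : List (Fin n)) (ht : t.Nodup) :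
    derivList (t.flatMap fun i => List.replicate (c i) (eDir n q i)) (gs s) =
      fun x => (t.map fun i => ∏ j ∈ Finset.range (c i), ((s i : ZMod q) - (j : ZMod q))).prod *
        gs (fun j => if j ∈ t then s j - c j else s j) x := by
  induction t with
  | nil =>
    funext x
    simp [derivList]
  | cons i t ih =>
    have hi : i ∉ t := (List.nodup_cons.mp ht).1
    have htd : t.Nodup := (List.nodup_cons.mp ht).2
    rw [List.flatMap_cons, derivList_append, ih htd, derivList_const_mul, derivList_replicate]
    funext x
    have hsi : (if i ∈ t then s i - c i else s i) = s i := by simp [hi]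
    have hexp : Function.update (fun j => if j ∈ t then s j - c j else s j) i
        ((if i ∈ t then s i - c i else s i) - c i) = fun j => if j ∈ i :: t then s j - c j else s j := by
      funext j
      by_cases hj : j = i
      · subst hj; simp [hi]
      · rw [Function.update_of_ne hj]
        simp [List.mem_cons, hj]
    rw [hexp, hsi]
    simp only [List.map_cons, List.prod_cons]
    ring


lemma derivList_full (c s : Fin n → ℕ) :
    derivList ((List.finRange n).flatMap fun i => List.replicate (c i) (eDir n q i)) (gs s) =
      fun x => (∏ i, ∏ j ∈ Finset.range (c i), ((s i : ZMod q) - (j : ZMod q))) *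
        gs (fun j => s j - c j) x := by
  rw [derivList_coords c s _ (List.nodup_finRange n)]
  have h1 : ((List.finRange n).map fun i =>
      ∏ j ∈ Finset.range (c i), ((s i : ZMod q) - (j : ZMod q))).prod =
      ∏ i, ∏ j ∈ Finset.range (c i), ((s i : ZMod q) - (j : ZMod q)) :=
    (Fin.prod_univ_def _).symm
  have h2 : (fun j => if j ∈ List.finRange n then s j - c j else s j) = fun j => s j - c j := by
    funext j
    simp [List.mem_finRange]
  rw [h1, h2]

lemma gs_zero_of_ne {s : Fin n → ℕ} (i : Fin n) (hi : s i ≠ 0) :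
    gs (q := q) s 0 = 0 := by
  unfold gs
  apply Finset.prod_eq_zero (Finset.mem_univ i)
  unfold ph
  apply Finset.prod_eq_zero (Finset.mem_range.mpr (Nat.pos_of_ne_zero hi))
  simp

lemma gs_zero_one : gs (n := n) (q := q) (fun _ => 0) 0 = 1 := by
  simp [gs, ph]

lemma coef_ne_zero [Fact q.Prime] {s m : Fin n → ℕ} (hm : ∀ i, m i < q)
    (hs : ∀ i, s i ≤ m i) :
    (∏ i, ∏ j ∈ Finset.range (s i), ((m i : ZMod q) - (j : ZMod q))) ≠ 0 := by
  rw [Finset.prod_ne_zero_iff]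
  intro i _
  rw [Finset.prod_ne_zero_iff]
  intro j hj
  have hj' : j < m i := lt_of_lt_of_le (Finset.mem_range.mp hj) (hs i)
  rw [← Nat.cast_sub (le_of_lt hj')]
  intro h
  rw [ZMod.natCast_eq_zero_iff] at h
  have h1 : 0 < m i - j := Nat.sub_pos_of_lt hj'
  have h2 : m i - j < q := lt_of_le_of_lt (Nat.sub_le _ _) (hm i)
  exact absurd (Nat.le_of_dvd h1 h) (not_le.mpr h2)

lemma coeff_vanish [Fact q.Prime] {d : ℕ} {f : (Fin n → ZMod q) → ZMod q}
    (H : ∀ (a : Fin (d + 1) → (Fin n → ZMod q)) (x : Fin n → ZMod q),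
      iterDeriv (d + 1) a f x = 0)
    (c : (Fin n → Fin q) → ZMod q)
    (hrep : ∀ x, f x = ∑ k : Fin n → Fin q, c k * gs (fun i => (k i : ℕ)) x)
    (k : Fin n → Fin q) (hk : d < ∑ i, (k i : ℕ)) : c k = 0 := by
  set sstar : Fin n → ℕ := fun i => (k i : ℕ) with hsstar
  set L : List (Fin n → ZMod q) :=
    (List.finRange n).flatMap fun i => List.replicate (sstar i) (eDir n q i) with hL
  have hlen : L.length = ∑ i, sstar i := by
    rw [hL, List.length_flatMap]
    simp only [Function.comp_def, List.length_replicate]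
    rw [← Fin.sum_univ_def]
  have hfe : f = fun x => ∑ m : Fin n → Fin q, c m * gs (fun i => (m i : ℕ)) x :=
    funext hrep
  have hmain : derivList L f 0 = 0 := derivList_vanish H L (by rw [hlen]; exact hk) 0
  rw [hfe] at hmain
  have hDL : derivList L (fun x => ∑ m : Fin n → Fin q, c m * gs (fun i => (m i : ℕ)) x)
      = fun x => ∑ m : Fin n → Fin q, c m *
          ((∏ i, ∏ j ∈ Finset.range (sstar i), (((m i : ℕ) : ZMod q) - (j : ZMod q))) *
            gs (fun j => (m j : ℕ) - sstar j) x) := by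
    rw [derivList_sum]
    funext x
    apply Finset.sum_congr rfl
    intro m _
    rw [derivList_const_mul, derivList_full sstar (fun i => (m i : ℕ))]
  rw [hDL] at hmain
  beta_reduce at hmain
  have hsingle : ∑ m : Fin n → Fin q, c m *
      ((∏ i, ∏ j ∈ Finset.range (sstar i), (((m i : ℕ) : ZMod q) - (j : ZMod q))) *
        gs (fun j => (m j : ℕ) - sstar j) 0)
      = c k * ((∏ i, ∏ j ∈ Finset.range (sstar i), (((k i : ℕ) : ZMod q) - (j : ZMod q))) *
        gs (fun j => (k j : ℕ) - sstar j) 0) := by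
    apply Fintype.sum_eq_single
    intro m hm
    by_cases hdom : ∀ i, sstar i ≤ (m i : ℕ)
    · -- some coordinate strictly bigger, gs factor vanishes
      have hex : ∃ i, m i ≠ k i := by
        by_contra hcon
        push_neg at hcon
        exact hm (funext hcon)
      obtain ⟨i, hi⟩ := hex
      have : (m i : ℕ) - sstar i ≠ 0 := by
        have hne : (m i : ℕ) ≠ sstar i := fun h => hi (Fin.val_injective h)
        have := hdom i
        omega
      rw [gs_zero_of_ne i this]
      ring
    · push_neg at hdom
      obtain ⟨i, hi⟩ := hdom
      have hz : (∏ i, ∏ j ∈ Finset.range (sstar i), (((m i : ℕ) : ZMod q) - (j : ZMod q))) = 0 := by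
        apply Finset.prod_eq_zero (Finset.mem_univ i)
        apply Finset.prod_eq_zero (Finset.mem_range.mpr hi)
        simp
      rw [hz]
      ring
  rw [hsingle] at hmain
  have hgone : gs (q := q) (fun j => (k j : ℕ) - sstar j) 0 = 1 := by
    have : (fun j => (k j : ℕ) - sstar j) = fun _ => 0 := by
      funext j; simp [hsstar]
    rw [this, gs_zero_one]
  rw [hgone, mul_one] at hmain
  have hnz : (∏ i, ∏ j ∈ Finset.range (sstar i), (((k i : ℕ) : ZMod q) - (j : ZMod q))) ≠ 0 :=
    coef_ne_zero (fun i => (k i).isLt) (fun i => le_refl _)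
  exact (mul_eq_zero.mp hmain).resolve_right hnz


lemma ph_expand (q m : ℕ) : ∃ E : ℕ → ZMod q, ∀ t : ZMod q,
    ph q m t = t ^ m + ∑ l ∈ Finset.range m, E l * t ^ l := by
  induction m with
  | zero => exact ⟨fun _ => 0, fun t => by simp [ph]⟩
  | succ m ih =>
    obtain ⟨E, hE⟩ := ih
    refine ⟨fun l => (if l = 0 then 0 else E (l - 1)) - (if l = m then (m : ZMod q) else 0)
      - (if l < m then (m : ZMod q) * E l else 0), fun t => ?_⟩
    have h1 : ph q (m + 1) t = ph q m t * (t - (m : ZMod q)) := Finset.prod_range_succ _ _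
    have hA : ∑ l ∈ Finset.range (m + 1), (if l = 0 then (0 : ZMod q) else E (l - 1)) * t ^ l
        = (∑ l ∈ Finset.range m, E l * t ^ l) * t := by
      rw [Finset.sum_range_succ']
      norm_num
      rw [Finset.sum_mul]
      apply Finset.sum_congr rfl
      intro l _
      rw [pow_succ, mul_assoc]
    have hB : ∑ l ∈ Finset.range (m + 1), (if l = m then (m : ZMod q) else 0) * t ^ l
        = (m : ZMod q) * t ^ m := by
      rw [Finset.sum_eq_single m]
      · rw [if_pos rfl]
      · intro b _ hb; rw [if_neg hb, zero_mul]
      · intro hm; exact absurd (Finset.self_mem_range_succ m) hm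
    have hC : ∑ l ∈ Finset.range (m + 1), (if l < m then (m : ZMod q) * E l else 0) * t ^ l
        = (m : ZMod q) * ∑ l ∈ Finset.range m, E l * t ^ l := by
      rw [Finset.sum_range_succ, if_neg (lt_irrefl m), zero_mul, add_zero, Finset.mul_sum]
      apply Finset.sum_congr rfl
      intro l hl
      rw [if_pos (Finset.mem_range.mp hl), mul_assoc]
    calc ph q (m + 1) t
        = (t ^ m + ∑ l ∈ Finset.range m, E l * t ^ l) * (t - (m : ZMod q)) := by rw [h1, hE]
      _ = t ^ (m + 1) + ((∑ l ∈ Finset.range m, E l * t ^ l) * t - (m : ZMod q) * t ^ m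
            - (m : ZMod q) * ∑ l ∈ Finset.range m, E l * t ^ l) := by ring
      _ = t ^ (m + 1) + ∑ l ∈ Finset.range (m + 1),
            ((if l = 0 then 0 else E (l - 1)) - (if l = m then (m : ZMod q) else 0)
              - (if l < m then (m : ZMod q) * E l else 0)) * t ^ l := by
          rw [← hA, ← hB, ← hC, ← Finset.sum_sub_distrib, ← Finset.sum_sub_distrib]
          congr 1
          apply Finset.sum_congr rfl
          intro l _
          ring

section Span
variable [Fact q.Prime]

/-- The falling-factorial functions indexed by `Fin q`. -/
def phFun (q : ℕ) (j : Fin q) : ZMod q → ZMod q := fun t => ph q (j : ℕ) t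

lemma pow_mem_span (m : ℕ) (hm : m < q) :
    (fun t : ZMod q => t ^ m) ∈ Submodule.span (ZMod q) (Set.range (phFun q)) := by
  induction m using Nat.strong_induction_on with
  | _ m ih =>
    obtain ⟨E, hE⟩ := ph_expand q m
    have hfe : (fun t : ZMod q => t ^ m)
        = phFun q ⟨m, hm⟩ - ∑ l ∈ Finset.range m, E l • fun t : ZMod q => t ^ l := by
      funext t
      simp only [Pi.sub_apply, Finset.sum_apply, Pi.smul_apply, smul_eq_mul, phFun]
      rw [hE t]
      ring
    rw [hfe]
    refine Submodule.sub_mem _ (Submodule.subset_span ⟨⟨m, hm⟩, rfl⟩) ?_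
    refine Submodule.sum_mem _ fun l hl => Submodule.smul_mem _ _ ?_
    exact ih l (Finset.mem_range.mp hl) (lt_trans (Finset.mem_range.mp hl) hm)

lemma fun_mem_span (h : ZMod q → ZMod q) :
    h ∈ Submodule.span (ZMod q) (Set.range (phFun q)) := by
  have hq2 : 2 ≤ q := (Fact.out : q.Prime).two_le
  have hone : (fun _ : ZMod q => (1 : ZMod q)) ∈
      Submodule.span (ZMod q) (Set.range (phFun q)) := by
    have := pow_mem_span (q := q) 0 (by omega)
    simpa using this
  have hdelta : ∀ a : ZMod q, (fun t : ZMod q => (t - a) ^ (q - 1)) ∈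
      Submodule.span (ZMod q) (Set.range (phFun q)) := by
    intro a
    have hexp : (fun t : ZMod q => (t - a) ^ (q - 1))
        = ∑ i ∈ Finset.range q, ((-1 : ZMod q) ^ (i + (q - 1)) * a ^ (q - 1 - i) *
            ((q - 1).choose i : ZMod q)) • fun t : ZMod q => t ^ i := by
      funext t
      simp only [Finset.sum_apply, Pi.smul_apply, smul_eq_mul]
      rw [sub_pow]
      have : q - 1 + 1 = q := by omega
      rw [this]
      apply Finset.sum_congr rfl
      intro i _
      ring
    rw [hexp]
    refine Submodule.sum_mem _ fun i hi => Submodule.smul_mem _ _ ?_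
    exact pow_mem_span i (Finset.mem_range.mp hi)
  have hfe : h = ∑ a : ZMod q, h a • ((fun _ : ZMod q => (1 : ZMod q))
      - fun t : ZMod q => (t - a) ^ (q - 1)) := by
    funext t
    simp only [Finset.sum_apply, Pi.smul_apply, Pi.sub_apply, smul_eq_mul]
    rw [Fintype.sum_eq_single t]
    · rw [sub_self, zero_pow (by omega : q - 1 ≠ 0)]
      simp
    · intro a ha
      rw [ZMod.pow_card_sub_one_eq_one (sub_ne_zero.mpr (Ne.symm ha))]
      simp
  rw [hfe]
  exact Submodule.sum_mem _ fun a _ =>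
    Submodule.smul_mem _ _ (Submodule.sub_mem _ hone (hdelta a))

lemma spV (h : ZMod q → ZMod q) :
    ∃ b : Fin q → ZMod q, ∀ t, h t = ∑ j : Fin q, b j * ph q (j : ℕ) t := by
  obtain ⟨b, hb⟩ := (Submodule.mem_span_range_iff_exists_fun _).mp (fun_mem_span h)
  refine ⟨b, fun t => ?_⟩
  rw [← hb]
  simp [phFun]

end Span


lemma span_n [Fact q.Prime] (f : (Fin n → ZMod q) → ZMod q) :
    ∃ c : (Fin n → Fin q) → ZMod q, ∀ x,
      f x = ∑ k : Fin n → Fin q, c k * ∏ i, ph q (k i : ℕ) (x i) := by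
  induction n with
  | zero =>
    refine ⟨fun _ => f default, fun x => ?_⟩
    have hx : x = default := funext fun i => i.elim0
    rw [hx, Fintype.sum_unique]
    simp
  | succ n ih =>
    choose b hb using fun (h : ZMod q → ZMod q) => spV h
    choose cfn hcfn using fun (g : (Fin n → ZMod q) → ZMod q) => ih g
    set c' : (Fin (n + 1) → Fin q) → ZMod q :=
      fun k => cfn (fun y => b (fun t => f (Fin.cons t y)) (k 0)) (fun i => k i.succ) with hc'
    refine ⟨c', fun x => ?_⟩
    have h0 : f x = f (Fin.cons (x 0) (fun i => x i.succ)) := by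
      congr 1
      exact (Fin.cons_self_tail x).symm
    rw [h0, hb (fun t => f (Fin.cons t (fun i => x i.succ))) (x 0)]
    have h2 : ∀ j : Fin q, b (fun t => f (Fin.cons t (fun i => x i.succ))) j
        = ∑ k : Fin n → Fin q, cfn (fun y => b (fun t => f (Fin.cons t y)) j) k *
            ∏ i, ph q (k i : ℕ) (x i.succ) := fun j =>
      hcfn (fun y => b (fun t => f (Fin.cons t y)) j) (fun i => x i.succ)
    rw [← (Fin.consEquiv (fun _ : Fin (n + 1) => Fin q)).sum_comp
      (fun k' => c' k' * ∏ i, ph q ((k' i : ℕ)) (x i)), Fintype.sum_prod_type]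
    apply Finset.sum_congr rfl
    intro j _
    rw [h2 j, Finset.sum_mul]
    apply Finset.sum_congr rfl
    intro k _
    have e1 : c' (Fin.consEquiv (fun _ : Fin (n + 1) => Fin q) (j, k))
        = cfn (fun y => b (fun t => f (Fin.cons t y)) j) k := by
      simp [hc', Fin.consEquiv]
    rw [e1]
    have e2 : (∏ i, ph q (((Fin.consEquiv (fun _ : Fin (n + 1) => Fin q) (j, k)) i : ℕ)) (x i))
        = ph q (j : ℕ) (x 0) * ∏ i, ph q ((k i : ℕ)) (x i.succ) := by
      rw [Fin.prod_univ_succ]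
      simp [Fin.consEquiv]
    rw [e2]
    ring


section Poly
open MvPolynomial

/-- All monomials of `P` have total degree `< D`. -/
def degLT (D : ℕ) (P : MvPolynomial (Fin n) (ZMod q)) : Prop :=
  ∀ t ∈ P.support, (t.sum fun _ e => e) < D

lemma degLT_zero (D : ℕ) : degLT (n := n) (q := q) D 0 := by
  intro t ht
  simp at ht

lemma degLT_mono {D E : ℕ} (h : D ≤ E) {P : MvPolynomial (Fin n) (ZMod q)}
    (hP : degLT D P) : degLT E P := fun t ht => lt_of_lt_of_le (hP t ht) h

lemma degLT_add {D : ℕ} {P Q : MvPolynomial (Fin n) (ZMod q)}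
    (hP : degLT D P) (hQ : degLT D Q) : degLT D (P + Q) := by
  intro t ht
  rcases Finset.mem_union.mp (MvPolynomial.support_add ht) with h | h
  · exact hP t h
  · exact hQ t h

lemma degLT_sum {ι : Type*} {D : ℕ} (A : Finset ι) (F : ι → MvPolynomial (Fin n) (ZMod q))
    (h : ∀ i ∈ A, degLT D (F i)) : degLT D (∑ i ∈ A, F i) := by
  classical
  induction A using Finset.induction_on with
  | empty => simpa using degLT_zero D
  | insert _ _ hnot ih =>
    rw [Finset.sum_insert hnot]
    exact degLT_add (h _ (Finset.mem_insert_self _ _))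
      (ih fun i hi => h i (Finset.mem_insert_of_mem hi))

lemma degLT_smul {D : ℕ} (c : ZMod q) {P : MvPolynomial (Fin n) (ZMod q)}
    (hP : degLT D P) : degLT D (c • P) := fun t ht => hP t (MvPolynomial.support_smul ht)

lemma degsum_add (u v : Fin n →₀ ℕ) :
    ((u + v).sum fun _ e => e) = (u.sum fun _ e => e) + (v.sum fun _ e => e) :=
  Finsupp.sum_add_index' (fun _ => rfl) (fun _ _ _ => rfl)

lemma degLT_mul_le {D E : ℕ} {P R : MvPolynomial (Fin n) (ZMod q)}
    (hP : ∀ t ∈ P.support, (t.sum fun _ e => e) ≤ D) (hR : degLT E R) :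
    degLT (D + E) (P * R) := by
  intro t ht
  have := MvPolynomial.support_mul P R ht
  rcases Finset.mem_add.mp this with ⟨u, hu, v, hv, rfl⟩
  rw [degsum_add]
  exact add_lt_add_of_le_of_lt (hP u hu) (hR v hv)

lemma deg_monomial_le {s : Fin n →₀ ℕ} {c : ZMod q} :
    ∀ t ∈ (MvPolynomial.monomial s c).support, (t.sum fun _ e => e) ≤ (s.sum fun _ e => e) := by
  intro t ht
  have := MvPolynomial.support_monomial_subset ht
  rw [Finset.mem_singleton] at this
  rw [this]

lemma degsum_single (i : Fin n) (b : ℕ) :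
    ((Finsupp.single i b).sum fun (_ : Fin n) (e : ℕ) => e) = b :=
  Finsupp.sum_single_index rfl

lemma degLT_X_pow (i : Fin n) (b D : ℕ) (hb : b < D) :
    degLT D ((X i : MvPolynomial (Fin n) (ZMod q)) ^ b) := by
  intro t ht
  rw [MvPolynomial.X_pow_eq_monomial] at ht
  have := MvPolynomial.support_monomial_subset ht
  rw [Finset.mem_singleton] at this
  rw [this, degsum_single]
  exact hb

lemma pow_expand (i : Fin n) (a : ZMod q) (b : ℕ) :
    ∃ R : MvPolynomial (Fin n) (ZMod q),
      (X i + C a) ^ b = X i ^ b + R ∧ degLT b R := by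
  induction b with
  | zero => exact ⟨0, by simp, degLT_zero 0⟩
  | succ b ih =>
    obtain ⟨R, hR, hRlt⟩ := ih
    refine ⟨C a * X i ^ b + R * X i + R * C a, ?_, ?_⟩
    · rw [pow_succ, hR]
      ring
    · refine degLT_add (degLT_add ?_ ?_) ?_
      · rw [MvPolynomial.C_mul']
        exact degLT_smul a (degLT_X_pow i b (b + 1) (Nat.lt_succ_self b))
      · rw [mul_comm]
        have h1 : degLT (1 + b) ((X i : MvPolynomial (Fin n) (ZMod q)) * R) := by
          apply degLT_mul_le ?_ hRlt
          intro t ht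
          rw [show (X i : MvPolynomial (Fin n) (ZMod q))
            = MvPolynomial.monomial (Finsupp.single i 1) 1 from rfl] at ht
          have h2 := deg_monomial_le t ht
          rwa [degsum_single] at h2
        rwa [Nat.add_comm 1 b] at h1
      · rw [mul_comm, MvPolynomial.C_mul']
        exact degLT_smul a (degLT_mono (Nat.le_succ b) hRlt)

lemma prod_expand (a : Fin n → ZMod q) (s : Fin n →₀ ℕ) :
    ∃ R : MvPolynomial (Fin n) (ZMod q),
      (∏ i ∈ s.support, (X i + C (a i)) ^ s i) = MvPolynomial.monomial s 1 + R ∧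
        degLT (s.sum fun _ e => e) R := by
  induction s using Finsupp.induction with
  | zero =>
    refine ⟨0, ?_, degLT_zero 0⟩
    simp [MvPolynomial.monomial_eq]
  | single_add i b s hi hb ih =>
    obtain ⟨R, hR, hRlt⟩ := ih
    obtain ⟨Rb, hRb, hRblt⟩ := pow_expand i (a i) b
    have hsupp : (Finsupp.single i b + s).support = insert i s.support := by
      rw [Finsupp.support_add_eq]
      · rw [Finsupp.support_single_ne_zero i hb]
        rfl
      · rw [Finsupp.support_single_ne_zero i hb]
        simp [Finset.disjoint_singleton_left, hi]
    have hdeg : ((Finsupp.single i b + s).sum fun _ e => e) = b + (s.sum fun _ e => e) := by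
      rw [degsum_add, degsum_single]
    have hprod : (∏ j ∈ (Finsupp.single i b + s).support,
          (X j + C (a j)) ^ (Finsupp.single i b + s) j)
        = (X i + C (a i)) ^ b * ∏ j ∈ s.support, (X j + C (a j)) ^ s j := by
      rw [hsupp, Finset.prod_insert (by simpa using hi)]
      have he1 : (Finsupp.single i b + s) i = b := by
        rw [Finsupp.add_apply, Finsupp.single_eq_same, Finsupp.notMem_support_iff.mp hi, add_zero]
      rw [he1]
      congr 1
      apply Finset.prod_congr rfl
      intro j hj
      have hji : i ≠ j := fun h => hi (h ▸ hj)
      rw [Finsupp.add_apply, Finsupp.single_eq_of_ne hji.symm, zero_add]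
    refine ⟨Rb * MvPolynomial.monomial s 1 + (MvPolynomial.monomial (Finsupp.single i b) 1) * R
      + Rb * R, ?_, ?_⟩
    · rw [hprod, hR, hRb, MvPolynomial.X_pow_eq_monomial]
      have hmm : (MvPolynomial.monomial (Finsupp.single i b) (1 : ZMod q)) *
          MvPolynomial.monomial s 1 = MvPolynomial.monomial (Finsupp.single i b + s) 1 := by
        rw [MvPolynomial.monomial_mul, one_mul]
      rw [← hmm]
      ring
    · rw [hdeg]
      refine degLT_add (degLT_add ?_ ?_) ?_
      · rw [mul_comm]
        have h3 := degLT_mul_le (deg_monomial_le (s := s) (c := (1 : ZMod q))) hRblt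
        rwa [Nat.add_comm] at h3
      · have hmono : ∀ t ∈ ((MvPolynomial.monomial (Finsupp.single i b) (1 : ZMod q))).support,
            (t.sum fun _ e => e) ≤ b := by
          intro t ht
          have h2 := deg_monomial_le t ht
          rwa [degsum_single] at h2
        exact degLT_mul_le hmono hRlt
      · exact degLT_mul_le (fun t ht => le_of_lt (hRblt t ht)) hRlt


noncomputable def shiftP (a : Fin n → ZMod q) (P : MvPolynomial (Fin n) (ZMod q)) :
    MvPolynomial (Fin n) (ZMod q) :=
  MvPolynomial.bind₁ (fun i => X i + C (a i)) P

lemma eval_shiftP (a x : Fin n → ZMod q) (P : MvPolynomial (Fin n) (ZMod q)) :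
    MvPolynomial.eval x (shiftP a P) = MvPolynomial.eval (x + a) P := by
  induction P using MvPolynomial.induction_on with
  | C c => simp [shiftP]
  | add p r hp hr => simp only [shiftP, map_add] at *; rw [hp, hr]
  | mul_X p i hp =>
    simp only [shiftP, map_mul, MvPolynomial.bind₁_X_right] at *
    rw [hp]
    simp

lemma delta_deg (a : Fin n → ZMod q) {m : ℕ} {P : MvPolynomial (Fin n) (ZMod q)}
    (hP : P.totalDegree ≤ m + 1) : (shiftP a P - P).totalDegree ≤ m := by
  have key : ∀ s ∈ P.support, degLT (m + 1)
      (MvPolynomial.bind₁ (fun i => X i + C (a i))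
          (MvPolynomial.monomial s (MvPolynomial.coeff s P))
        - MvPolynomial.monomial s (MvPolynomial.coeff s P)) := by
    intro s hs
    obtain ⟨R, hR, hRlt⟩ := prod_expand a s
    rw [MvPolynomial.bind₁_monomial, hR, mul_add, MvPolynomial.C_mul_monomial, mul_one,
      add_sub_cancel_left, MvPolynomial.C_mul']
    apply degLT_smul
    apply degLT_mono ?_ hRlt
    calc (s.sum fun _ e => e) ≤ P.totalDegree := MvPolynomial.le_totalDegree hs
      _ ≤ m + 1 := hP
  have hsum : shiftP a P - P = ∑ s ∈ P.support,
      (MvPolynomial.bind₁ (fun i => X i + C (a i))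
          (MvPolynomial.monomial s (MvPolynomial.coeff s P))
        - MvPolynomial.monomial s (MvPolynomial.coeff s P)) := by
    rw [Finset.sum_sub_distrib]
    congr 1
    · rw [shiftP]
      conv_lhs => rw [MvPolynomial.as_sum P]
      rw [map_sum]
    · exact MvPolynomial.as_sum P
  have hlt : degLT (m + 1) (shiftP a P - P) := by
    rw [hsum]
    exact degLT_sum _ _ key
  show (shiftP a P - P).support.sup (fun s => s.sum fun _ e => e) ≤ m
  exact Finset.sup_le fun t ht => Nat.lt_succ_iff.mp (hlt t ht)

lemma forward_step (a : Fin n → ZMod q) {m : ℕ} {f : (Fin n → ZMod q) → ZMod q}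
    (h : ∃ P : MvPolynomial (Fin n) (ZMod q), P.totalDegree ≤ m + 1 ∧
      ∀ x, MvPolynomial.eval x P = f x) :
    ∃ P : MvPolynomial (Fin n) (ZMod q), P.totalDegree ≤ m ∧
      ∀ x, MvPolynomial.eval x P = discDeriv a f x := by
  obtain ⟨P, hP, hPf⟩ := h
  refine ⟨shiftP a P - P, delta_deg a hP, fun x => ?_⟩
  rw [map_sub, eval_shiftP, hPf, hPf]
  rfl

lemma forward_zero (a : Fin n → ZMod q) {f : (Fin n → ZMod q) → ZMod q}
    (h : ∃ P : MvPolynomial (Fin n) (ZMod q), P.totalDegree ≤ 0 ∧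
      ∀ x, MvPolynomial.eval x P = f x) :
    ∀ x, discDeriv a f x = 0 := by
  obtain ⟨P, hP, hPf⟩ := h
  have hconst : ∀ u v : Fin n → ZMod q, MvPolynomial.eval u P = MvPolynomial.eval v P := by
    have h0 : P.totalDegree = 0 := Nat.le_zero.mp hP
    rw [MvPolynomial.totalDegree_eq_zero_iff] at h0
    intro u v
    rw [MvPolynomial.eval_eq, MvPolynomial.eval_eq]
    apply Finset.sum_congr rfl
    intro s hs
    have hs0 : s = 0 := Finsupp.ext fun i => h0 s hs i
    subst hs0
    simp
  intro x
  show f (x + a) - f x = 0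
  rw [← hPf, ← hPf, hconst (x + a) x, sub_self]

lemma forward_main {d : ℕ} {f : (Fin n → ZMod q) → ZMod q}
    (hdeg : ∃ P : MvPolynomial (Fin n) (ZMod q), P.totalDegree ≤ d ∧
      ∀ x, MvPolynomial.eval x P = f x) :
    ∀ (k : ℕ), k ≤ d → ∀ (a : Fin k → (Fin n → ZMod q)),
      ∃ P : MvPolynomial (Fin n) (ZMod q), P.totalDegree ≤ d - k ∧
        ∀ x, MvPolynomial.eval x P = iterDeriv k a f x := by
  intro k
  induction k with
  | zero =>
    intro _ a
    simpa [iterDeriv] using hdeg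
  | succ k ih =>
    intro hk a
    have h1 := ih (Nat.le_of_succ_le hk) (fun i => a i.castSucc)
    have h2 : d - k = (d - (k + 1)) + 1 := by omega
    rw [h2] at h1
    exact forward_step (a (Fin.last k)) h1

end Poly
end DegProof

theorem stmt0 (q : ℕ) [Fact q.Prime] (n d : ℕ) (hd : d < q)
    (f : (Fin n → ZMod q) → ZMod q) :
    (∃ P : MvPolynomial (Fin n) (ZMod q), P.totalDegree ≤ d ∧
        ∀ x, MvPolynomial.eval x P = f x) ↔
      ∀ (a : Fin (d + 1) → (Fin n → ZMod q)) (x : Fin n → ZMod q),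
        iterDeriv (d + 1) a f x = 0 := by
  open DegProof MvPolynomial in
  constructor
  · intro hdeg a x
    have h1 := forward_main hdeg d le_rfl (fun i => a i.castSucc)
    rw [Nat.sub_self] at h1
    show discDeriv (a (Fin.last d)) (iterDeriv d (fun i => a i.castSucc) f) x = 0
    exact forward_zero _ h1 x
  · intro H
    obtain ⟨c, hc⟩ := span_n f
    have hvanish : ∀ k : Fin n → Fin q, d < ∑ i, (k i : ℕ) → c k = 0 :=
      fun k hk => coeff_vanish H c (fun x => hc x) k hk
    classical
    refine ⟨∑ k ∈ Finset.univ.filter (fun k : Fin n → Fin q => (∑ i, (k i : ℕ)) ≤ d),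
      MvPolynomial.C (c k) * ∏ i, ∏ j ∈ Finset.range (k i : ℕ),
        (MvPolynomial.X i - MvPolynomial.C (j : ZMod q)), ?_, ?_⟩
    · apply le_trans (MvPolynomial.totalDegree_finset_sum _ _)
      apply Finset.sup_le
      intro k hk
      apply le_trans (MvPolynomial.totalDegree_mul _ _)
      rw [MvPolynomial.totalDegree_C, zero_add]
      apply le_trans (MvPolynomial.totalDegree_finset_prod _ _)
      apply le_trans ?_ ((Finset.mem_filter.mp hk).2)
      apply Finset.sum_le_sum
      intro i _
      apply le_trans (MvPolynomial.totalDegree_finset_prod _ _)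
      have hXC : ∀ jj : ZMod q,
          (MvPolynomial.X i - MvPolynomial.C jj : MvPolynomial (Fin n) (ZMod q)).totalDegree ≤ 1 := by
        intro jj
        rw [sub_eq_add_neg, ← map_neg MvPolynomial.C]
        apply le_trans (MvPolynomial.totalDegree_add _ _)
        simp [MvPolynomial.totalDegree_X, MvPolynomial.totalDegree_C]
      calc ∑ j ∈ Finset.range (k i : ℕ),
            (MvPolynomial.X i - MvPolynomial.C (j : ZMod q) :
              MvPolynomial (Fin n) (ZMod q)).totalDegree
          ≤ ∑ _j ∈ Finset.range (k i : ℕ), 1 := Finset.sum_le_sum fun j _ => hXC _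
        _ = (k i : ℕ) := by simp
    · intro x
      rw [map_sum, hc x]
      have heval : ∀ k : Fin n → Fin q,
          MvPolynomial.eval x (MvPolynomial.C (c k) * ∏ i, ∏ j ∈ Finset.range (k i : ℕ),
            (MvPolynomial.X i - MvPolynomial.C (j : ZMod q)))
          = c k * ∏ i, ph q (k i : ℕ) (x i) := by
        intro k
        simp [ph]
      rw [Finset.sum_congr rfl fun k _ => heval k]
      rw [← Finset.sum_filter_add_sum_filter_not Finset.univ
        (fun k : Fin n → Fin q => (∑ i, (k i : ℕ)) ≤ d)
        (fun k => c k * ∏ i, ph q (k i : ℕ) (x i))]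
      have hzero : ∑ k ∈ Finset.univ.filter
          (fun k : Fin n → Fin q => ¬ (∑ i, (k i : ℕ)) ≤ d),
          c k * ∏ i, ph q (k i : ℕ) (x i) = 0 := by
        apply Finset.sum_eq_zero
        intro k hk
        rw [hvanish k (Nat.lt_of_not_le (Finset.mem_filter.mp hk).2), zero_mul]
      rw [hzero, add_zero]
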